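/- (Iterated power formula) Let R[x;σ,δ] be an Ore extension with σ an automorphism and δ a q-skew σ-derivation. Define F_i(a) = [n choose i]_q · σ^i(δ^{n−i}(a)). Then for all a ∈ R and n, m ∈ ℕ with m ≥ 1, (a xⁿ)^m = Σ_{i_1,…,i_{m−1}=0}^{n} a·F_{i_{m−1}}(a·F_{i_{m−2}}(⋯ a·F_{i_1}(a)⋯)) · x^{i_1+⋯+i_{m−1}+n} in R[x;σ,δ]. -/
import Mathlib


/-- The Gaussian (q-)binomial coefficient `[n choose i]_q`. -/
def qBinom {k : Type*} [Field k] (q : k) : ℕ → ℕ → k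
  | _, 0 => 1
  | 0, _ + 1 => 0
  | n + 1, i + 1 => qBinom q n i + q ^ (i + 1) * qBinom q n (i + 1)

/-- The nested product `a·F_{i_{m−1}}(a·F_{i_{m−2}}(⋯ a·F_{i_1}(a)⋯))`, where the
list of indices is `[i_{m−1}, …, i_1]`. -/
def nestProd {R : Type*} [Ring R] (a : R) (F : ℕ → R → R) : List ℕ → R
  | [] => a
  | i :: t => a * F i (nestProd a F t)


lemma qBinom_zero_right {k : Type*} [Field k] (q : k) (n : ℕ) : qBinom q n 0 = 1 := by
  cases n <;> rfl

lemma qBinom_eq_zero {k : Type*} [Field k] (q : k) : ∀ n i : ℕ, n < i → qBinom q n i = 0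
  | 0, i + 1, _ => rfl
  | n + 1, i + 1, h => by
    rw [qBinom, qBinom_eq_zero q n i (by omega), qBinom_eq_zero q n (i+1) (by omega)]
    ring

lemma delta_sigma_iter {k : Type*} [Field k] {R : Type*} [Ring R] [Algebra k R]
    (σ : R ≃ₐ[k] R) (δ : R →ₗ[k] R) (q : k)
    (hq : ∀ a : R, q • σ (δ a) = δ (σ a)) :
    ∀ (i : ℕ) (b : R), δ ((⇑σ)^[i] b) = q ^ i • (⇑σ)^[i] (δ b)
  | 0, b => by simp
  | i + 1, b => by
    rw [Function.iterate_succ_apply', ← hq, delta_sigma_iter σ δ q hq i b,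
      map_smul, Function.iterate_succ_apply', smul_smul, pow_succ, mul_comm]

lemma ore_key_lemma {k : Type*} [Field k] {R : Type*} [Ring R] [Algebra k R]
    (σ : R ≃ₐ[k] R) (δ : R →ₗ[k] R) (q : k)
    (hq : ∀ a : R, q • σ (δ a) = δ (σ a))
    {S : Type*} [Ring S] [Algebra k S] (φ : R →ₐ[k] S) (X : S)
    (hrel : ∀ r : R, X * φ r = φ (σ r) * X + φ (δ r)) :
    ∀ (n : ℕ) (a : R), X ^ n * φ a =
      ∑ i ∈ Finset.range (n+1), φ (qBinom q n i • (⇑σ)^[i] ((⇑δ)^[n-i] a)) * X ^ i := by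
  intro n
  induction n with
  | zero => intro a; simp [qBinom]
  | succ n ih =>
    intro a
    rw [pow_succ', mul_assoc, ih, Finset.mul_sum]
    have step : ∀ i ∈ Finset.range (n+1),
        X * (φ (qBinom q n i • (⇑σ)^[i] ((⇑δ)^[n-i] a)) * X ^ i) =
        φ (σ (qBinom q n i • (⇑σ)^[i] ((⇑δ)^[n-i] a))) * X ^ (i+1)
          + φ (δ (qBinom q n i • (⇑σ)^[i] ((⇑δ)^[n-i] a))) * X ^ i := by
      intro i _
      rw [← mul_assoc, hrel, add_mul, mul_assoc, ← pow_succ']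
    rw [Finset.sum_congr rfl step, Finset.sum_add_distrib]
    have hσsum : (∑ i ∈ Finset.range (n+1),
          φ (σ (qBinom q n i • (⇑σ)^[i] ((⇑δ)^[n-i] a))) * X ^ (i+1))
        = ∑ j ∈ Finset.range (n+2),
            φ ((if j = 0 then 0 else qBinom q n (j-1)) • (⇑σ)^[j] ((⇑δ)^[n+1-j] a)) * X ^ j := by
      conv_rhs => rw [Finset.sum_range_succ']
      norm_num
      refine Finset.sum_congr rfl fun i _ => ?_
      rw [Nat.succ_sub_succ, ← Function.iterate_succ_apply' (⇑σ), Function.iterate_succ_apply]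
    have hδsum : (∑ i ∈ Finset.range (n+1),
          φ (δ (qBinom q n i • (⇑σ)^[i] ((⇑δ)^[n-i] a))) * X ^ i)
        = ∑ j ∈ Finset.range (n+2),
            φ ((q ^ j * qBinom q n j) • (⇑σ)^[j] ((⇑δ)^[n+1-j] a)) * X ^ j := by
      conv_rhs => rw [Finset.sum_range_succ]
      rw [qBinom_eq_zero q n (n+1) (by omega), mul_zero, zero_smul, map_zero, zero_mul,
        add_zero]
      refine Finset.sum_congr rfl fun i hi => ?_
      rw [Finset.mem_range] at hi
      rw [map_smul, delta_sigma_iter σ δ q hq, smul_smul, mul_comm,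
        ← Function.iterate_succ_apply' (⇑δ)]
      rw [show (n - i).succ = n + 1 - i from by omega]
    rw [hσsum, hδsum, ← Finset.sum_add_distrib]
    refine Finset.sum_congr rfl fun j _ => ?_
    rw [← add_mul, ← map_add, ← add_smul]
    congr 2
    cases j with
    | zero => simp [qBinom_zero_right]
    | succ i => simp [qBinom]

lemma sum_pi_fin_succ {β M : Type*} [Fintype β] [AddCommMonoid M] (m : ℕ)
    (f : (Fin (m+1) → β) → M) :
    ∑ ι : Fin (m+1) → β, f ι = ∑ b : β, ∑ ι : Fin m → β, f (Fin.cons b ι) := by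
  have : ∑ p : β × (Fin m → β), f (Fin.cons p.1 p.2)
      = ∑ b : β, ∑ ι : Fin m → β, f (Fin.cons b ι) := Fintype.sum_prod_type _
  rw [← this]
  refine Fintype.sum_equiv (Fin.consEquiv fun _ => β).symm _ _ fun ι => ?_
  simp [Fin.consEquiv]

/-- Iterated power formula in an Ore extension:
`(a xⁿ)^m = Σ_{i_1,…,i_{m−1}=0}^{n} a·F_{i_{m−1}}(⋯ a·F_{i_1}(a)⋯) · x^{i_1+⋯+i_{m−1}+n}`,
where `F_i(a) = [n choose i]_q • σ^i(δ^{n−i}(a))`. -/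
theorem ore_iterated_power_formula {k : Type*} [Field k] {R : Type*} [Ring R] [Algebra k R]
    (σ : R ≃ₐ[k] R) (δ : R →ₗ[k] R)
    (hleib : ∀ a b : R, δ (a * b) = σ a * δ b + δ a * b)
    (q : k) (hq0 : q ≠ 0)
    (hq : ∀ a : R, q • σ (δ a) = δ (σ a))
    {S : Type*} [Ring S] [Algebra k S] (φ : R →ₐ[k] S) (hφ : Function.Injective φ)
    (X : S)
    (hbasis : ∀ s : S, ∃! p : ℕ →₀ R, s = ∑ i ∈ p.support, φ (p i) * X ^ i)
    (hrel : ∀ r : R, X * φ r = φ (σ r) * X + φ (δ r)) :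
    ∀ (a : R) (n m : ℕ), 1 ≤ m →
      (φ a * X ^ n) ^ m =
        ∑ ι : Fin (m - 1) → Fin (n + 1),
          φ (nestProd a (fun i b => qBinom q n i • (⇑σ)^[i] ((⇑δ)^[n - i] b))
              (List.ofFn (fun j => (ι j : ℕ)))) *
            X ^ ((∑ j, (ι j : ℕ)) + n) := by
  intro a n m hm
  set F : ℕ → R → R := fun i b => qBinom q n i • (⇑σ)^[i] ((⇑δ)^[n - i] b) with hF
  suffices main : ∀ m' : ℕ, (φ a * X ^ n) ^ (m' + 1) =
      ∑ ι : Fin m' → Fin (n + 1),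
        φ (nestProd a F (List.ofFn (fun j => (ι j : ℕ)))) * X ^ ((∑ j, (ι j : ℕ)) + n) by
    have h := main (m - 1)
    rw [show m - 1 + 1 = m from by omega] at h
    exact h
  intro m'
  induction m' with
  | zero =>
    simp [nestProd]
  | succ m ihm =>
    rw [pow_succ', ihm, Finset.mul_sum, sum_pi_fin_succ]
    rw [Finset.sum_comm]
    refine Finset.sum_congr rfl fun ι _ => ?_
    have hsimp : ∀ b : Fin (n+1),
        φ (nestProd a F (List.ofFn fun j : Fin (m+1) => ((Fin.cons b ι : Fin (m+1) → Fin (n+1)) j : ℕ))) *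
          X ^ ((∑ j : Fin (m+1), ((Fin.cons b ι : Fin (m+1) → Fin (n+1)) j : ℕ)) + n)
        = φ (a * F (b : ℕ) (nestProd a F (List.ofFn fun j : Fin m => (ι j : ℕ)))) *
          X ^ ((b : ℕ) + ((∑ j : Fin m, (ι j : ℕ)) + n)) := by
      intro b
      rw [List.ofFn_succ, Fin.sum_univ_succ]
      simp only [Fin.cons_zero, Fin.cons_succ, nestProd]
      rw [add_assoc]
    rw [Finset.sum_congr rfl fun b _ => hsimp b]
    -- now prove the left side equals this sum
    have hP := ore_key_lemma σ δ q hq φ X hrel n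
      (nestProd a F (List.ofFn fun j : Fin m => (ι j : ℕ)))
    calc (φ a * X ^ n) * (φ (nestProd a F (List.ofFn fun j : Fin m => (ι j : ℕ)))
            * X ^ ((∑ j : Fin m, (ι j : ℕ)) + n))
        = φ a * (X ^ n * φ (nestProd a F (List.ofFn fun j : Fin m => (ι j : ℕ))))
            * X ^ ((∑ j : Fin m, (ι j : ℕ)) + n) := by simp only [mul_assoc]
      _ = ∑ i ∈ Finset.range (n+1),
            φ (a * F i (nestProd a F (List.ofFn fun j : Fin m => (ι j : ℕ))))
              * X ^ (i + ((∑ j : Fin m, (ι j : ℕ)) + n)) := by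
            rw [hP, Finset.mul_sum, Finset.sum_mul]
            refine Finset.sum_congr rfl fun i _ => ?_
            simp only [hF, map_mul, pow_add, mul_assoc]
      _ = ∑ b : Fin (n+1),
            φ (a * F (b : ℕ) (nestProd a F (List.ofFn fun j : Fin m => (ι j : ℕ))))
              * X ^ ((b : ℕ) + ((∑ j : Fin m, (ι j : ℕ)) + n)) := by
            rw [← Fin.sum_univ_eq_sum_range]
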